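/- For every integer n ≥ 9, the 3-ASC index of the path P_n satisfies θ_3(P_n) ≥ 2. -/

import Mathlib

namespace AscPaper

open SimpleGraph

/-- The eccentricity of a vertex `u` in a graph `G`, as an extended natural number:
the supremum of distances from `u` to all vertices. -/
noncomputable def ecc {V : Type*} (G : SimpleGraph V) (u : V) : ℕ∞ :=
  ⨆ v, G.edist u v

/-- The radius of a graph: the minimum eccentricity over all vertices. -/
noncomputable def graphRadius {V : Type*} (G : SimpleGraph V) : ℕ∞ :=
  ⨅ u, ecc G u

/-- The diameter of a graph: the maximum eccentricity over all vertices. -/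
noncomputable def graphDiam {V : Type*} (G : SimpleGraph V) : ℕ∞ :=
  ⨆ u, ecc G u

/-- The eccentric set of `u`: all vertices at distance exactly `ecc G u` from `u`. -/
def eccSet {V : Type*} (G : SimpleGraph V) (u : V) : Set V :=
  {v | G.edist u v = ecc G u}

/-- `H` is an `r`-ASC (almost self-centered) graph: `H` is connected, has radius `r`,
and all but exactly two vertices are central (have eccentricity equal to the radius). -/
def IsASC {V : Type*} (r : ℕ) (H : SimpleGraph V) : Prop :=
  H.Connected ∧ graphRadius H = (r : ℕ∞) ∧
    {u : V | ecc H u ≠ graphRadius H}.ncard = 2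

/-- The `r`-ASC index of a graph `G`: the minimum number `k` of vertices that need to be
added to `G` so that the resulting graph is an `r`-ASC graph containing `G` as an
induced subgraph. -/
noncomputable def theta {V : Type*} (r : ℕ) (G : SimpleGraph V) : ℕ :=
  sInf {k : ℕ | ∃ H : SimpleGraph (V ⊕ Fin k), IsASC r H ∧
    ∀ u v : V, H.Adj (Sum.inl u) (Sum.inl v) ↔ G.Adj u v}

/-! ## Tools -/

section Tools

variable {V : Type*} {H : SimpleGraph V}

lemma phi_le_walk (φ : V → ℕ) (hφ : ∀ x y, H.Adj x y → φ y ≤ φ x + 1)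
    {s t : V} (p : H.Walk s t) : φ t ≤ φ s + p.length := by
  induction p with
  | nil => simp
  | cons h q ih =>
    rename_i a b c
    have h1 := hφ a b h
    rw [Walk.length_cons]
    omega

lemma potential_le_edist (φ : V → ℕ) (hφ : ∀ x y, H.Adj x y → φ y ≤ φ x + 1)
    {s t : V} (hs : φ s = 0) : (φ t : ℕ∞) ≤ H.edist s t := by
  refine le_iInf fun p => ?_
  have := phi_le_walk φ hφ p
  rw [hs] at this
  exact_mod_cast Nat.cast_le.mpr (by omega)

lemma edist_le_one_of_adj {x y : V} (h : H.Adj x y) : H.edist x y ≤ 1 :=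
  (edist_eq_one_iff_adj.mpr h).le

lemma edist_le_two_step {x t y : V} (h1 : H.Adj x t) (h2 : H.Adj t y) :
    H.edist x y ≤ 2 := by
  calc H.edist x y ≤ H.edist x t + H.edist t y := SimpleGraph.edist_triangle
    _ ≤ 1 + 1 := add_le_add (edist_le_one_of_adj h1) (edist_le_one_of_adj h2)
    _ = 2 := by norm_num

lemma edist_le_three_step {x a b y : V} (h1 : H.Adj x a) (h2 : H.Adj a b) (h3 : H.Adj b y) :
    H.edist x y ≤ 3 := by
  calc H.edist x y ≤ H.edist x a + H.edist a y := SimpleGraph.edist_triangle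
    _ ≤ 1 + 2 := add_le_add (edist_le_one_of_adj h1) (edist_le_two_step h2 h3)
    _ = 3 := by norm_num

lemma edist_le_one_add {x t y : V} (h1 : H.Adj x t) {c : ℕ∞} (h2 : H.edist t y ≤ c) :
    H.edist x y ≤ 1 + c := by
  calc H.edist x y ≤ H.edist x t + H.edist t y := SimpleGraph.edist_triangle
    _ ≤ 1 + c := add_le_add (edist_le_one_of_adj h1) h2

lemma edist_le_ecc (u v : V) : H.edist u v ≤ ecc H u :=
  le_iSup (fun w => H.edist u w) v

lemma ecc_ge_of_edist {u v : V} {c : ℕ∞} (h : c ≤ H.edist u v) : c ≤ ecc H u :=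
  le_trans h (edist_le_ecc u v)

lemma radius_le_ecc (u : V) : graphRadius H ≤ ecc H u :=
  iInf_le (fun w => ecc H w) u

end Tools

open Sum

/-! ## Upper bound on distances through the induced path -/

section PathBound

variable {n : ℕ} {W : Type*} {H : SimpleGraph (Fin n ⊕ W)}

lemma edist_le_of_add (hind : ∀ u v : Fin n, H.Adj (inl u) (inl v) ↔ (pathGraph n).Adj u v)
    (d : ℕ) : ∀ u v : Fin n, u.val + d = v.val → H.edist (inl u) (inl v) ≤ (d : ℕ∞) := by
  induction d with
  | zero =>
    intro u v h
    have : u = v := Fin.ext (by omega)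
    simp [this, SimpleGraph.edist_self]
  | succ d ih =>
    intro u v h
    have hlt : u.val + 1 < n := by have := v.isLt; omega
    set u' : Fin n := ⟨u.val + 1, hlt⟩ with hu'
    have hadj : H.Adj (inl u) (inl u') := (hind u u').mpr (pathGraph_adj.mpr (Or.inl rfl))
    have h2 : H.edist (inl u') (inl v) ≤ (d : ℕ∞) := ih u' v (by simp [hu']; omega)
    calc H.edist (inl u) (inl v) ≤ 1 + (d : ℕ∞) := edist_le_one_add hadj h2
      _ = ((d + 1 : ℕ) : ℕ∞) := by push_cast; ring

lemma edist_le_natDist (hind : ∀ u v : Fin n, H.Adj (inl u) (inl v) ↔ (pathGraph n).Adj u v)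
    (u v : Fin n) : H.edist (inl u) (inl v) ≤ (Nat.dist u.val v.val : ℕ∞) := by
  rcases le_total u.val v.val with h | h
  · have := edist_le_of_add hind (v.val - u.val) u v (by omega)
    have hd : Nat.dist u.val v.val = v.val - u.val := by simp [Nat.dist]; omega
    rwa [hd]
  · have := edist_le_of_add hind (u.val - v.val) v u (by omega)
    have hd : Nat.dist u.val v.val = u.val - v.val := by simp [Nat.dist]; omega
    rw [hd, SimpleGraph.edist_comm]
    exact this

end PathBound

/-! ## No 3-ASC graph on `P_n` plus zero or one vertex, for `n ≥ 9` -/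

def phiZ (n : ℕ) : Fin n ⊕ Fin 0 → ℕ
  | .inl t => min t.val 8
  | .inr e => e.elim0

def phiW (n z : ℕ) : Fin n ⊕ Fin 1 → ℕ
  | .inl t => min (Nat.dist z t.val) 4
  | .inr _ => 3

section LowerBound

variable {n : ℕ}

lemma zero_not (hn : 9 ≤ n) (H : SimpleGraph (Fin n ⊕ Fin 0)) (hA : IsASC 3 H)
    (hind : ∀ u v : Fin n, H.Adj (inl u) (inl v) ↔ (pathGraph n).Adj u v) : False := by
  obtain ⟨-, hrad, -⟩ := hA
  have hrad3 : graphRadius H = (3 : ℕ∞) := by rw [hrad]; norm_num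
  have h4 : graphRadius H < 4 := by rw [hrad3]; norm_num
  obtain ⟨c, hc⟩ := iInf_lt_iff.mp h4
  have hcle : ∀ v, H.edist c v ≤ 3 := by
    intro v
    have h1 : H.edist c v < 4 := lt_of_le_of_lt (edist_le_ecc c v) hc
    have h34 : (4 : ℕ∞) = 3 + 1 := by norm_num
    rw [h34, ENat.lt_add_one_iff (by norm_num)] at h1
    exact h1
  obtain ⟨c', rfl⟩ : ∃ c', c = inl c' := by
    cases c with
    | inl x => exact ⟨x, rfl⟩
    | inr x => exact x.elim0
  have h0n : (0 : ℕ) < n := by omega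
  have h8n : (8 : ℕ) < n := by omega
  have hub : H.edist (inl ⟨0, h0n⟩) (inl ⟨8, h8n⟩) ≤ 6 := by
    calc H.edist (inl ⟨0, h0n⟩) (inl ⟨8, h8n⟩)
        ≤ H.edist (inl ⟨0, h0n⟩) (inl c') + H.edist (inl c') (inl ⟨8, h8n⟩) :=
          SimpleGraph.edist_triangle
      _ ≤ 3 + 3 := add_le_add (by rw [SimpleGraph.edist_comm]; exact hcle _) (hcle _)
      _ = 6 := by norm_num
  have hlow : ((phiZ n (inl ⟨8, h8n⟩) : ℕ) : ℕ∞) ≤ H.edist (inl ⟨0, h0n⟩) (inl ⟨8, h8n⟩) := by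
    refine potential_le_edist (phiZ n) ?_ ?_
    · rintro (u | e) (v | e) hadj
      · have hp := (hind u v).mp hadj
        rw [pathGraph_adj] at hp
        simp only [phiZ]
        omega
      · exact e.elim0
      · exact e.elim0
      · exact e.elim0
    · show min (0 : ℕ) 8 = 0
      norm_num
  have h8 : (phiZ n (inl ⟨8, h8n⟩) : ℕ) = 8 := by
    show min (8 : ℕ) 8 = 8
    norm_num
  rw [h8] at hlow
  have hcontra : ((8 : ℕ) : ℕ∞) ≤ 6 := le_trans hlow hub
  norm_num at hcontra

lemma one_not (hn : 9 ≤ n) (H : SimpleGraph (Fin n ⊕ Fin 1)) (hA : IsASC 3 H)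
    (hind : ∀ u v : Fin n, H.Adj (inl u) (inl v) ↔ (pathGraph n).Adj u v) : False := by
  obtain ⟨-, hrad, hcard⟩ := hA
  have hrad3 : graphRadius H = (3 : ℕ∞) := by rw [hrad]; norm_num
  have hge : ∀ x, (3 : ℕ∞) ≤ ecc H x := by
    intro x
    have h := radius_le_ecc (H := H) x
    rw [hrad3] at h
    exact h
  have h2 : (2 : ℕ∞) < ⨆ v, H.edist (inr 0) v :=
    lt_of_lt_of_le (by norm_num) (hge (inr 0))
  obtain ⟨z, hz⟩ := lt_iSup_iff.mp h2
  have hz3 : (3 : ℕ∞) ≤ H.edist (inr 0) z := by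
    have h21 : (2 : ℕ∞) + 1 ≤ H.edist (inr 0) z :=
      (ENat.add_one_le_iff (by norm_num)).mpr hz
    have h213 : (2 : ℕ∞) + 1 = 3 := by norm_num
    rwa [h213] at h21
  obtain ⟨z', rfl⟩ : ∃ z', z = inl z' := by
    cases z with
    | inl x => exact ⟨x, rfl⟩
    | inr j =>
      exfalso
      have hj : j = 0 := Subsingleton.elim _ _
      rw [hj] at hz3
      simp [SimpleGraph.edist_self] at hz3
  have hA2 : ∀ a : Fin n, H.Adj (inr 0) (inl a) → 2 ≤ Nat.dist z'.val a.val := by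
    intro a ha
    have h1 : H.edist (inr 0) (inl z') ≤ 1 + (Nat.dist a.val z'.val : ℕ∞) :=
      edist_le_one_add ha (edist_le_natDist hind a z')
    have h3 := le_trans hz3 h1
    by_contra hlt
    push_neg at hlt
    have hd1 : Nat.dist a.val z'.val ≤ 1 := by
      rw [Nat.dist_comm]
      omega
    have hcon : (3 : ℕ∞) ≤ 1 + 1 := by
      refine le_trans h3 (add_le_add le_rfl ?_)
      exact_mod_cast Nat.cast_le.mpr hd1
    norm_num at hcon
  have hfar : ∀ v : Fin n, 4 ≤ Nat.dist z'.val v.val →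
      (4 : ℕ∞) ≤ H.edist (inl z') (inl v) := by
    intro v hv
    have hpot : ((phiW n z'.val (inl v) : ℕ) : ℕ∞) ≤ H.edist (inl z') (inl v) := by
      refine potential_le_edist (phiW n z'.val) ?_ ?_
      · rintro (u | i) (v' | j) hadj
        · have hp := (hind u v').mp hadj
          rw [pathGraph_adj] at hp
          simp only [phiW]
          simp only [Nat.dist] at *
          omega
        · have hj : j = 0 := Subsingleton.elim _ _
          subst hj
          have h2d := hA2 u (H.adj_symm hadj)
          simp only [phiW]
          omega
        · have hi : i = 0 := Subsingleton.elim _ _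
          subst hi
          have h2d := hA2 v' hadj
          simp only [phiW]
          omega
        · exfalso
          have hi : i = 0 := Subsingleton.elim _ _
          have hj : j = 0 := Subsingleton.elim _ _
          subst hi; subst hj
          exact H.irrefl hadj
      · show min (Nat.dist z'.val z'.val) 4 = 0
        simp [Nat.dist_self]
    have hmin : (phiW n z'.val (inl v) : ℕ) = 4 := by
      show min (Nat.dist z'.val v.val) 4 = 4
      omega
    rwa [hmin] at hpot
  -- noncentral vertices
  have hncz : (inl z' : Fin n ⊕ Fin 1) ∈ {u : Fin n ⊕ Fin 1 | ecc H u ≠ graphRadius H} := by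
    obtain ⟨va, hva⟩ : ∃ va : Fin n, 4 ≤ Nat.dist z'.val va.val := by
      by_cases h3 : z'.val ≤ 3
      · exact ⟨⟨n - 1, by omega⟩, by simp [Nat.dist]; omega⟩
      · exact ⟨⟨0, by omega⟩, by simp [Nat.dist]; omega⟩
    have h1 : (4 : ℕ∞) ≤ ecc H (inl z') := ecc_ge_of_edist (hfar va hva)
    simp only [Set.mem_setOf_eq, hrad3]
    intro hE
    rw [hE] at h1
    norm_num at h1
  have hncv : ∀ v : Fin n, 4 ≤ Nat.dist z'.val v.val →
      (inl v : Fin n ⊕ Fin 1) ∈ {u : Fin n ⊕ Fin 1 | ecc H u ≠ graphRadius H} := by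
    intro v hv
    have h2' : (4 : ℕ∞) ≤ ecc H (inl v) := by
      refine ecc_ge_of_edist (v := inl z') ?_
      rw [SimpleGraph.edist_comm]
      exact hfar v hv
    simp only [Set.mem_setOf_eq, hrad3]
    intro hE
    rw [hE] at h2'
    norm_num at h2'
  have hz'lt := z'.isLt
  obtain ⟨va, vb, hva, hvb, hne⟩ :
      ∃ va vb : Fin n, 4 ≤ Nat.dist z'.val va.val ∧ 4 ≤ Nat.dist z'.val vb.val ∧ va ≠ vb := by
    by_cases h3 : z'.val ≤ 3
    · refine ⟨⟨n - 1, by omega⟩, ⟨n - 2, by omega⟩, ?_, ?_, ?_⟩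
      · simp [Nat.dist]; omega
      · simp [Nat.dist]; omega
      · intro h; rw [Fin.mk.injEq] at h; omega
    · by_cases h4 : z'.val = 4
      · refine ⟨⟨0, by omega⟩, ⟨n - 1, by omega⟩, ?_, ?_, ?_⟩
        · simp [Nat.dist]; omega
        · simp [Nat.dist]; omega
        · intro h; rw [Fin.mk.injEq] at h; omega
      · refine ⟨⟨0, by omega⟩, ⟨1, by omega⟩, ?_, ?_, ?_⟩
        · simp [Nat.dist]; omega
        · simp [Nat.dist]; omega
        · intro h; rw [Fin.mk.injEq] at h; omega
  have hne1 : (inl va : Fin n ⊕ Fin 1) ≠ inl z' := by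
    intro h
    rw [inl.injEq] at h
    rw [h] at hva
    simp [Nat.dist_self] at hva
  have hne2 : (inl vb : Fin n ⊕ Fin 1) ≠ inl z' := by
    intro h
    rw [inl.injEq] at h
    rw [h] at hvb
    simp [Nat.dist_self] at hvb
  have hne3 : (inl va : Fin n ⊕ Fin 1) ≠ inl vb := by
    intro h; rw [inl.injEq] at h; exact hne h
  have hsub : ({inl va, inl vb, inl z'} : Set (Fin n ⊕ Fin 1)) ⊆
      {u : Fin n ⊕ Fin 1 | ecc H u ≠ graphRadius H} := by
    intro x hx
    rcases hx with rfl | rfl | rfl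
    · exact hncv va hva
    · exact hncv vb hvb
    · exact hncz
  have h3card : ({inl va, inl vb, inl z'} : Set (Fin n ⊕ Fin 1)).ncard = 3 := by
    rw [Set.ncard_insert_of_notMem (by simp [hne3, hne1]) (Set.toFinite _),
      Set.ncard_pair hne2]
  have hle := Set.ncard_le_ncard hsub (Set.toFinite _)
  rw [h3card, hcard] at hle
  omega

end LowerBound

/-! ## The construction: `P_n` plus four vertices is a 3-ASC graph -/

def hNbr (n h u : ℕ) : Prop :=
  if h = 0 then Even u
  else if h = 1 then Odd u
  else if h = 2 then u < 2
  else n - 2 ≤ u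

def conG (n : ℕ) : SimpleGraph (Fin n ⊕ Fin 4) where
  Adj x y :=
    match x, y with
    | inl u, inl v => u.val + 1 = v.val ∨ v.val + 1 = u.val
    | inl u, inr h => hNbr n h.val u.val
    | inr h, inl u => hNbr n h.val u.val
    | inr _, inr _ => False
  symm := by
    constructor
    rintro (u | h) (v | g) hyp
    · exact Or.symm hyp
    · exact hyp
    · exact hyp
    · exact hyp
  loopless := by
    constructor
    rintro (u | h) hyp
    · rcases hyp with h | h <;> omega
    · exact hyp

section Construction

variable {n : ℕ}

lemma conG_adj_ll {u v : Fin n} :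
    (conG n).Adj (inl u) (inl v) ↔ (u.val + 1 = v.val ∨ v.val + 1 = u.val) := Iff.rfl

lemma conG_adj_lr {u : Fin n} {h : Fin 4} :
    (conG n).Adj (inl u) (inr h) ↔ hNbr n h.val u.val := Iff.rfl

lemma conG_adj_rl {u : Fin n} {h : Fin 4} :
    (conG n).Adj (inr h) (inl u) ↔ hNbr n h.val u.val := Iff.rfl

lemma conG_adj_rr {h g : Fin 4} : (conG n).Adj (inr h) (inr g) ↔ False := Iff.rfl

lemma fv0 : ((0 : Fin 4)).val = 0 := rfl
lemma fv1 : ((1 : Fin 4)).val = 1 := rfl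
lemma fv2 : ((2 : Fin 4)).val = 2 := rfl
lemma fv3 : ((3 : Fin 4)).val = 3 := rfl

lemma hNbr0 {u : ℕ} : hNbr n 0 u ↔ Even u := by simp [hNbr]
lemma hNbr1 {u : ℕ} : hNbr n 1 u ↔ Odd u := by simp [hNbr]
lemma hNbr2 {u : ℕ} : hNbr n 2 u ↔ u < 2 := by simp [hNbr]
lemma hNbr3 {u : ℕ} : hNbr n 3 u ↔ n - 2 ≤ u := by simp [hNbr]

lemma adj_m1 {u : Fin n} (h : Even u.val) : (conG n).Adj (inr 0) (inl u) := by
  rw [conG_adj_rl, fv0, hNbr0]; exact h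

lemma adj_m2 {u : Fin n} (h : Odd u.val) : (conG n).Adj (inr 1) (inl u) := by
  rw [conG_adj_rl, fv1, hNbr1]; exact h

lemma adj_p {u : Fin n} (h : u.val < 2) : (conG n).Adj (inl u) (inr 2) := by
  rw [conG_adj_lr, fv2, hNbr2]; exact h

lemma adj_q {u : Fin n} (h : n - 2 ≤ u.val) : (conG n).Adj (inl u) (inr 3) := by
  rw [conG_adj_lr, fv3, hNbr3]; exact h

lemma adj_pp {u v : Fin n} (h : u.val + 1 = v.val) : (conG n).Adj (inl u) (inl v) := by
  rw [conG_adj_ll]; exact Or.inl h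

variable (hn : 9 ≤ n)
include hn

/-- hubs are within distance 2 of every path vertex -/
lemma hubA (u : Fin n) : (conG n).edist (inr 0) (inl u) ≤ 2 := by
  rcases Nat.even_or_odd u.val with he | ho
  · exact le_trans (edist_le_one_of_adj (adj_m1 he)) (by norm_num)
  · have h1 : 1 ≤ u.val := by rcases ho with ⟨k, hk⟩; omega
    have hlt := u.isLt
    have hm : u.val - 1 < n := by omega
    refine edist_le_two_step (t := inl ⟨u.val - 1, hm⟩) (adj_m1 ?_) (adj_pp ?_)
    · rw [Nat.odd_iff] at ho
      rw [Nat.even_iff]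
      show (u.val - 1) % 2 = 0
      omega
    · show (u.val - 1) + 1 = u.val
      omega

lemma hubB (u : Fin n) : (conG n).edist (inr 1) (inl u) ≤ 2 := by
  rcases Nat.even_or_odd u.val with he | ho
  · by_cases h0 : u.val = 0
    · have h1n : 1 < n := by omega
      refine edist_le_two_step (t := inl ⟨1, h1n⟩) (adj_m2 ?_) ?_
      · exact ⟨0, rfl⟩
      · rw [conG_adj_ll]
        right
        show u.val + 1 = 1
        omega
    · have hlt := u.isLt
      have hm : u.val - 1 < n := by omega
      refine edist_le_two_step (t := inl ⟨u.val - 1, hm⟩) (adj_m2 ?_) (adj_pp ?_)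
      · rw [Nat.even_iff] at he
        rw [Nat.odd_iff]
        show (u.val - 1) % 2 = 1
        omega
      · show (u.val - 1) + 1 = u.val
        omega
  · exact le_trans (edist_le_one_of_adj (adj_m2 ho)) (by norm_num)

lemma pathpath (u v : Fin n) : (conG n).edist (inl u) (inl v) ≤ 3 := by
  rcases Nat.even_or_odd u.val with he | ho
  · calc (conG n).edist (inl u) (inl v) ≤ 1 + 2 :=
        edist_le_one_add ((conG n).adj_symm (adj_m1 he)) (hubA hn v)
      _ = 3 := by norm_num
  · calc (conG n).edist (inl u) (inl v) ≤ 1 + 2 :=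
        edist_le_one_add ((conG n).adj_symm (adj_m2 ho)) (hubB hn v)
      _ = 3 := by norm_num

lemma exists_even_end : ∃ t : Fin n, Even t.val ∧ n - 2 ≤ t.val := by
  by_cases hp : Even (n - 2)
  · exact ⟨⟨n - 2, by omega⟩, hp, le_refl _⟩
  · refine ⟨⟨n - 1, by omega⟩, ?_, ?_⟩
    · rw [Nat.even_iff]
      rw [Nat.not_even_iff] at hp
      show (n - 1) % 2 = 0
      omega
    · show n - 2 ≤ n - 1
      omega

lemma exists_odd_end : ∃ t : Fin n, Odd t.val ∧ n - 2 ≤ t.val := by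
  by_cases hp : Odd (n - 2)
  · exact ⟨⟨n - 2, by omega⟩, hp, le_refl _⟩
  · refine ⟨⟨n - 1, by omega⟩, ?_, ?_⟩
    · rw [Nat.odd_iff]
      rw [Nat.not_odd_iff] at hp
      show (n - 1) % 2 = 1
      omega
    · show n - 2 ≤ n - 1
      omega

lemma hub0p : (conG n).edist (inr 0) (inr 2) ≤ 2 := by
  have h0n : 0 < n := by omega
  exact edist_le_two_step (t := inl ⟨0, h0n⟩) (adj_m1 ⟨0, rfl⟩) (adj_p (by norm_num))

lemma hub1p : (conG n).edist (inr 1) (inr 2) ≤ 2 := by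
  have h1n : 1 < n := by omega
  exact edist_le_two_step (t := inl ⟨1, h1n⟩) (adj_m2 ⟨0, rfl⟩) (adj_p (by norm_num))

lemma hub0q : (conG n).edist (inr 0) (inr 3) ≤ 2 := by
  obtain ⟨t, ht1, ht2⟩ := exists_even_end hn
  exact edist_le_two_step (t := inl t) (adj_m1 ht1) (adj_q ht2)

lemma hub1q : (conG n).edist (inr 1) (inr 3) ≤ 2 := by
  obtain ⟨t, ht1, ht2⟩ := exists_odd_end hn
  exact edist_le_two_step (t := inl t) (adj_m2 ht1) (adj_q ht2)

lemma hubhub : (conG n).edist (inr 0) (inr 1) ≤ 3 := by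
  have h0n : 0 < n := by omega
  have h1n : 1 < n := by omega
  refine edist_le_three_step (a := inl ⟨0, h0n⟩) (b := inl ⟨1, h1n⟩)
    (adj_m1 ⟨0, rfl⟩) (adj_pp rfl) ((conG n).adj_symm (adj_m2 ⟨0, rfl⟩))

lemma pathp (u : Fin n) : (conG n).edist (inl u) (inr 2) ≤ 3 := by
  have h0n : 0 < n := by omega
  have h1n : 1 < n := by omega
  rcases Nat.even_or_odd u.val with he | ho
  · exact edist_le_three_step (a := inr 0) (b := inl ⟨0, h0n⟩)
      ((conG n).adj_symm (adj_m1 he)) (adj_m1 ⟨0, rfl⟩) (adj_p (by norm_num))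
  · exact edist_le_three_step (a := inr 1) (b := inl ⟨1, h1n⟩)
      ((conG n).adj_symm (adj_m2 ho)) (adj_m2 ⟨0, rfl⟩) (adj_p (by norm_num))

lemma pathq (u : Fin n) : (conG n).edist (inl u) (inr 3) ≤ 3 := by
  rcases Nat.even_or_odd u.val with he | ho
  · obtain ⟨t, ht1, ht2⟩ := exists_even_end hn
    exact edist_le_three_step (a := inr 0) (b := inl t)
      ((conG n).adj_symm (adj_m1 he)) (adj_m1 ht1) (adj_q ht2)
  · obtain ⟨t, ht1, ht2⟩ := exists_odd_end hn
    exact edist_le_three_step (a := inr 1) (b := inl t)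
      ((conG n).adj_symm (adj_m2 ho)) (adj_m2 ht1) (adj_q ht2)

lemma ecc_m1_le : ecc (conG n) (inr 0) ≤ 3 := by
  refine iSup_le ?_
  rintro (v | h)
  · exact le_trans (hubA hn v) (by norm_num)
  · rcases h with ⟨hv, hlt⟩
    interval_cases hv
    · have : (⟨0, hlt⟩ : Fin 4) = 0 := rfl
      rw [this]
      simp [SimpleGraph.edist_self]
    · exact hubhub hn
    · exact le_trans (hub0p hn) (by norm_num)
    · exact le_trans (hub0q hn) (by norm_num)

lemma ecc_m2_le : ecc (conG n) (inr 1) ≤ 3 := by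
  refine iSup_le ?_
  rintro (v | h)
  · exact le_trans (hubB hn v) (by norm_num)
  · rcases h with ⟨hv, hlt⟩
    interval_cases hv
    · rw [SimpleGraph.edist_comm]
      exact hubhub hn
    · have : (⟨1, hlt⟩ : Fin 4) = 1 := rfl
      rw [this]
      simp [SimpleGraph.edist_self]
    · exact le_trans (hub1p hn) (by norm_num)
    · exact le_trans (hub1q hn) (by norm_num)

lemma ecc_path_le (u : Fin n) : ecc (conG n) (inl u) ≤ 3 := by
  refine iSup_le ?_
  rintro (v | h)
  · exact pathpath hn u v
  · rcases h with ⟨hv, hlt⟩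
    interval_cases hv
    · rw [SimpleGraph.edist_comm]
      exact le_trans (hubA hn u) (by norm_num)
    · rw [SimpleGraph.edist_comm]
      exact le_trans (hubB hn u) (by norm_num)
    · exact pathp hn u
    · exact pathq hn u

end Construction

/-! potentials for the lower bounds in the construction -/

def phi1 (n : ℕ) : Fin n ⊕ Fin 4 → ℕ
  | .inl u => if Even u.val then 1 else 2
  | .inr h => if h.val = 0 then 0 else if h.val = 1 then 3 else 2

def phip (n : ℕ) : Fin n ⊕ Fin 4 → ℕ
  | .inl u => if u.val ≤ 1 then 1 else min u.val 3
  | .inr h => if h.val = 2 then 0 else if h.val = 3 then 4 else 2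

def phiq (n : ℕ) : Fin n ⊕ Fin 4 → ℕ
  | .inl u => if n - 2 ≤ u.val then 1 else min (n - 1 - u.val) 3
  | .inr h => if h.val = 3 then 0 else if h.val = 2 then 4 else 2

section ConstructionLower

variable {n : ℕ}

lemma hphi1 : ∀ x y, (conG n).Adj x y → phi1 n y ≤ phi1 n x + 1 := by
  rintro (u | h) (v | g) hyp
  · simp only [phi1]
    split_ifs <;> omega
  · rw [conG_adj_lr] at hyp
    simp only [phi1, hNbr] at *
    split_ifs at hyp ⊢ <;>
      (try simp only [Nat.even_iff, Nat.odd_iff, Nat.not_even_iff, Nat.not_odd_iff] at *) <;>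
      omega
  · rw [conG_adj_rl] at hyp
    simp only [phi1, hNbr] at *
    split_ifs at hyp ⊢ <;>
      (try simp only [Nat.even_iff, Nat.odd_iff, Nat.not_even_iff, Nat.not_odd_iff] at *) <;>
      omega
  · rw [conG_adj_rr] at hyp
    exact hyp.elim

lemma hphip (hn : 9 ≤ n) : ∀ x y, (conG n).Adj x y → phip n y ≤ phip n x + 1 := by
  rintro (u | h) (v | g) hyp
  · rw [conG_adj_ll] at hyp
    simp only [phip]
    split_ifs <;> omega
  · rw [conG_adj_lr] at hyp
    have hu := u.isLt
    simp only [phip, hNbr] at *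
    split_ifs at hyp ⊢ <;>
      (try simp only [Nat.even_iff, Nat.odd_iff, Nat.not_even_iff, Nat.not_odd_iff] at *) <;>
      omega
  · rw [conG_adj_rl] at hyp
    have hv := v.isLt
    simp only [phip, hNbr] at *
    split_ifs at hyp ⊢ <;>
      (try simp only [Nat.even_iff, Nat.odd_iff, Nat.not_even_iff, Nat.not_odd_iff] at *) <;>
      omega
  · rw [conG_adj_rr] at hyp
    exact hyp.elim

lemma hphiq (hn : 9 ≤ n) : ∀ x y, (conG n).Adj x y → phiq n y ≤ phiq n x + 1 := by
  rintro (u | h) (v | g) hyp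
  · rw [conG_adj_ll] at hyp
    have hu := u.isLt
    have hv := v.isLt
    simp only [phiq]
    split_ifs <;> omega
  · rw [conG_adj_lr] at hyp
    have hu := u.isLt
    simp only [phiq, hNbr] at *
    split_ifs at hyp ⊢ <;>
      (try simp only [Nat.even_iff, Nat.odd_iff, Nat.not_even_iff, Nat.not_odd_iff] at *) <;>
      omega
  · rw [conG_adj_rl] at hyp
    have hv := v.isLt
    simp only [phiq, hNbr] at *
    split_ifs at hyp ⊢ <;>
      (try simp only [Nat.even_iff, Nat.odd_iff, Nat.not_even_iff, Nat.not_odd_iff] at *) <;>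
      omega
  · rw [conG_adj_rr] at hyp
    exact hyp.elim

lemma sep_m1m2 : (3 : ℕ∞) ≤ (conG n).edist (inr 0) (inr 1) := by
  have h := potential_le_edist (H := conG n) (phi1 n) hphi1
    (s := inr 0) (t := inr 1) (by simp [phi1, fv0])
  have h3 : phi1 n (inr 1) = 3 := by simp [phi1, fv1]
  rw [h3] at h
  exact_mod_cast h

lemma dist_p (hn : 9 ≤ n) (x : Fin n ⊕ Fin 4) :
    ((phip n x : ℕ) : ℕ∞) ≤ (conG n).edist (inr 2) x := by
  refine potential_le_edist (phip n) (hphip hn) ?_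
  simp [phip, fv2]

lemma dist_q (hn : 9 ≤ n) (x : Fin n ⊕ Fin 4) :
    ((phiq n x : ℕ) : ℕ∞) ≤ (conG n).edist (inr 3) x := by
  refine potential_le_edist (phiq n) (hphiq hn) ?_
  simp [phiq, fv3]

variable (hn : 9 ≤ n)
include hn

lemma ecc_m1_eq : ecc (conG n) (inr 0) = 3 := by
  refine le_antisymm (ecc_m1_le hn) ?_
  exact ecc_ge_of_edist (sep_m1m2 (n := n))

lemma ecc_m2_eq : ecc (conG n) (inr 1) = 3 := by
  refine le_antisymm (ecc_m2_le hn) ?_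
  refine ecc_ge_of_edist (v := inr 0) ?_
  rw [SimpleGraph.edist_comm]
  exact sep_m1m2

lemma ecc_path_eq (u : Fin n) : ecc (conG n) (inl u) = 3 := by
  have hu := u.isLt
  refine le_antisymm (ecc_path_le hn u) ?_
  by_cases h3 : 3 ≤ u.val
  · refine ecc_ge_of_edist (v := inr 2) ?_
    rw [SimpleGraph.edist_comm]
    have h := dist_p hn (inl u)
    have heq : phip n (inl u) = 3 := by
      simp only [phip]
      split_ifs <;> omega
    rw [heq] at h
    exact_mod_cast h
  · refine ecc_ge_of_edist (v := inr 3) ?_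
    rw [SimpleGraph.edist_comm]
    have h := dist_q hn (inl u)
    have heq : phiq n (inl u) = 3 := by
      simp only [phiq]
      split_ifs <;> omega
    rw [heq] at h
    exact_mod_cast h

lemma ecc_p_ge : (4 : ℕ∞) ≤ ecc (conG n) (inr 2) := by
  refine ecc_ge_of_edist (v := inr 3) ?_
  have h := dist_p hn (inr 3)
  have heq : phip n (inr 3) = 4 := by simp [phip, fv3]
  rw [heq] at h
  exact_mod_cast h

lemma ecc_q_ge : (4 : ℕ∞) ≤ ecc (conG n) (inr 3) := by
  refine ecc_ge_of_edist (v := inr 2) ?_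
  have h := dist_q hn (inr 2)
  have heq : phiq n (inr 2) = 4 := by simp [phiq, fv2]
  rw [heq] at h
  exact_mod_cast h

lemma radius_conG : graphRadius (conG n) = 3 := by
  refine le_antisymm ?_ ?_
  · exact le_trans (radius_le_ecc (inr 0)) (le_of_eq (ecc_m1_eq hn))
  · refine le_iInf ?_
    rintro (u | h)
    · exact le_of_eq (ecc_path_eq hn u).symm
    · rcases h with ⟨hv, hlt⟩
      interval_cases hv
    --  0
      · exact le_of_eq (ecc_m1_eq hn).symm
      · exact le_of_eq (ecc_m2_eq hn).symm
      · exact le_trans (by norm_num) (ecc_p_ge hn)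
      · exact le_trans (by norm_num) (ecc_q_ge hn)

lemma connected_conG : (conG n).Connected := by
  rw [connected_iff]
  refine ⟨?_, ⟨inr 0⟩⟩
  have hre : ∀ x, (conG n).Reachable (inr 0) x := by
    intro x
    refine reachable_of_edist_ne_top ?_
    have h1 : (conG n).edist (inr 0) x ≤ 3 :=
      le_trans (edist_le_ecc _ _) (le_of_eq (ecc_m1_eq hn))
    intro h
    rw [h] at h1
    exact absurd h1 (by norm_num)
  intro x y
  exact (hre x).symm.trans (hre y)

lemma isASC_conG : IsASC 3 (conG n) := by
  refine ⟨connected_conG hn, by rw [radius_conG hn]; norm_num, ?_⟩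
  have hset : {u : Fin n ⊕ Fin 4 | ecc (conG n) u ≠ graphRadius (conG n)} =
      {inr 2, inr 3} := by
    ext x
    simp only [Set.mem_setOf_eq, Set.mem_insert_iff, Set.mem_singleton_iff, radius_conG hn]
    rcases x with u | h
    · constructor
      · intro hx
        exact absurd (ecc_path_eq hn u) hx
      · rintro (h | h) <;> simp at h
    · rcases h with ⟨hv, hlt⟩
      interval_cases hv
      · rw [show (⟨0, hlt⟩ : Fin 4) = 0 from rfl]
        constructor
        · intro hx
          exact absurd (ecc_m1_eq hn) hx
        · rintro (h | h) <;> simp at h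
      · rw [show (⟨1, hlt⟩ : Fin 4) = 1 from rfl]
        constructor
        · intro hx
          exact absurd (ecc_m2_eq hn) hx
        · rintro (h | h) <;> simp at h
      · rw [show (⟨2, hlt⟩ : Fin 4) = 2 from rfl]
        constructor
        · intro _
          left
          rfl
        · intro _ hE
          have h4 := ecc_p_ge hn
          rw [hE] at h4
          norm_num at h4
      · rw [show (⟨3, hlt⟩ : Fin 4) = 3 from rfl]
        constructor
        · intro _
          right
          rfl
        · intro _ hE
          have h4 := ecc_q_ge hn
          rw [hE] at h4
          norm_num at h4
  rw [hset]
  refine Set.ncard_pair ?_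
  simp

end ConstructionLower

/-- For every integer `n ≥ 9`, the 3-ASC index of the path `P_n` satisfies
`θ_3(P_n) ≥ 2`. -/
theorem theta_three_path_ge (n : ℕ) (hn : 9 ≤ n) :
    2 ≤ theta 3 (pathGraph n) := by
  show 2 ≤ sInf {k : ℕ | ∃ H : SimpleGraph (Fin n ⊕ Fin k), IsASC 3 H ∧
    ∀ u v : Fin n, H.Adj (Sum.inl u) (Sum.inl v) ↔ (pathGraph n).Adj u v}
  set S := {k : ℕ | ∃ H : SimpleGraph (Fin n ⊕ Fin k), IsASC 3 H ∧
    ∀ u v : Fin n, H.Adj (Sum.inl u) (Sum.inl v) ↔ (pathGraph n).Adj u v} with hS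
  have hne : S.Nonempty := by
    refine ⟨4, conG n, isASC_conG hn, ?_⟩
    intro u v
    rw [conG_adj_ll, pathGraph_adj]
  have hmem := Nat.sInf_mem hne
  by_contra hlt
  push_neg at hlt
  have h01 : sInf S = 0 ∨ sInf S = 1 := by omega
  rcases h01 with h0 | h1
  · rw [h0] at hmem
    obtain ⟨H, hA, hind⟩ := hmem
    exact zero_not hn H hA hind
  · rw [h1] at hmem
    obtain ⟨H, hA, hind⟩ := hmem
    exact one_not hn H hA hind

end AscPaper
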